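/- With δ* = Σ_{i=1}^n (t_i − 1) ∂/∂t_i, we have (δ* + 1)(Σ_{j=1}^{n+1} tr(A_j A_{n+2})/(t_j − 1)) = −tr(A_{n+1} A_{n+2}). -/

import Mathlib

open Finset

noncomputable section

/-- Extend `t = (t₁, …, tₙ) : Fin n → ℂ` by the fixed points `t_{n+1} = 0` and
`t_{n+2} = 1` (0-based: indices `n` and `n+1` of `Fin (n+2)`). -/
def ext (n : ℕ) (t : Fin n → ℂ) (j : Fin (n + 2)) : ℂ :=
  if h : (j : ℕ) < n then t ⟨j, h⟩ else if (j : ℕ) = n then 0 else 1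

/-- Inclusion of indices `1, …, n` into `1, …, n+2` (0-based). -/
def inc (n : ℕ) : Fin n → Fin (n + 2) := Fin.castLE (by omega)

/-- The partial derivative `∂f/∂t_i` of a scalar function on `ℂⁿ`. -/
def pderiv (n : ℕ) (i : Fin n) (f : (Fin n → ℂ) → ℂ) (t : Fin n → ℂ) : ℂ :=
  fderiv ℂ f t (Pi.single i 1)

/-- `ρ = −(θ₁ + ⋯ + θ_{n+3})/2`. -/
def rho (n : ℕ) (θ : Fin (n + 3) → ℂ) : ℂ := -(∑ j, θ j) / 2

/-- The constants `C_{ij} = −θ_iθ_j/2 + (θ_i² + θ_j²)/(2(n+1))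
− (Σ_k θ_k²)/(2(n+1)(n+2))`. -/
def Cc (n : ℕ) (θ : Fin (n + 3) → ℂ) (i j : Fin (n + 2)) : ℂ :=
  -(θ (Fin.castSucc i) * θ (Fin.castSucc j)) / 2
    + (θ (Fin.castSucc i) ^ 2 + θ (Fin.castSucc j) ^ 2) / (2 * ((n : ℂ) + 1))
    - (∑ k, θ k ^ 2) / (2 * ((n : ℂ) + 1) * ((n : ℂ) + 2))

/-- `H̃_i = Σ_{1 ≤ j ≤ n+2, j ≠ i} tr(A_i A_j)/(t_i − t_j)`. -/
def Htil (n : ℕ) (A : Fin (n + 2) → (Fin n → ℂ) → Matrix (Fin 2) (Fin 2) ℂ)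
    (i : Fin n) (t : Fin n → ℂ) : ℂ :=
  ∑ j ∈ Finset.univ.filter (fun j => j ≠ inc n i),
    (A (inc n i) t * A j t).trace / (t i - ext n t j)

variable {n : ℕ} {i : Fin n} {t : Fin n → ℂ} {c d : (Fin n → ℂ) → ℂ}

section helpers


lemma pderiv_sum {ι : Type*} (u : Finset ι) (F : ι → (Fin n → ℂ) → ℂ)
    (h : ∀ j ∈ u, DifferentiableAt ℂ (F j) t) :
    pderiv n i (fun s => ∑ j ∈ u, F j s) t = ∑ j ∈ u, pderiv n i (F j) t := by
  unfold pderiv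
  rw [fderiv_fun_sum h]
  simp [ContinuousLinearMap.sum_apply]

lemma pderiv_mul (hc : DifferentiableAt ℂ c t) (hd : DifferentiableAt ℂ d t) :
    pderiv n i (fun s => c s * d s) t = c t * pderiv n i d t + d t * pderiv n i c t := by
  unfold pderiv
  rw [fderiv_fun_mul hc hd]
  simp [smul_eq_mul]

lemma pderiv_inv (hd : DifferentiableAt ℂ d t) (hx : d t ≠ 0) :
    pderiv n i (fun s => (d s)⁻¹) t = -pderiv n i d t / d t ^ 2 := by
  unfold pderiv
  have h := ((hasFDerivAt_inv hx).comp t hd.hasFDerivAt).fderiv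
  have h2 : (fun s => (d s)⁻¹) = (fun x => x⁻¹) ∘ d := rfl
  rw [h2, h]
  simp [ContinuousLinearMap.comp_apply]
  ring

lemma pderiv_div (hc : DifferentiableAt ℂ c t) (hd : DifferentiableAt ℂ d t) (hx : d t ≠ 0) :
    pderiv n i (fun s => c s / d s) t
      = (pderiv n i c t * d t - c t * pderiv n i d t) / d t ^ 2 := by
  have h1 : (fun s => c s / d s) = fun s => c s * (d s)⁻¹ := by
    funext s; rw [div_eq_mul_inv]
  rw [h1, pderiv_mul hc (hd.fun_inv hx), pderiv_inv hd hx]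
  field_simp
  ring

lemma pderiv_coord (j : Fin n) :
    pderiv n i (fun s => s j) t = if j = i then 1 else 0 := by
  unfold pderiv
  have : (fun s : Fin n → ℂ => s j) = (ContinuousLinearMap.proj j : (Fin n → ℂ) →L[ℂ] ℂ) := rfl
  rw [this, ContinuousLinearMap.fderiv]
  simp [Pi.single_apply]

lemma pderiv_const (k : ℂ) : pderiv n i (fun _ => k) t = 0 := by
  unfold pderiv; rw [fderiv_fun_const]; simp

lemma pderiv_sub_const (k : ℂ) (f : (Fin n → ℂ) → ℂ) :
    pderiv n i (fun s => f s - k) t = pderiv n i f t := by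
  unfold pderiv; rw [fderiv_sub_const]

lemma pderiv_trace_mul (M N : (Fin n → ℂ) → Matrix (Fin 2) (Fin 2) ℂ)
    (P Q : Matrix (Fin 2) (Fin 2) ℂ)
    (hM : ∀ k l, DifferentiableAt ℂ (fun s => M s k l) t)
    (hN : ∀ k l, DifferentiableAt ℂ (fun s => N s k l) t)
    (hP : ∀ k l, pderiv n i (fun s => M s k l) t = P k l)
    (hQ : ∀ k l, pderiv n i (fun s => N s k l) t = Q k l) :
    pderiv n i (fun s => (M s * N s).trace) t = (P * N t).trace + (M t * Q).trace := by
  have h1 : (fun s => (M s * N s).trace)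
      = fun s => ∑ k : Fin 2, ∑ l : Fin 2, M s k l * N s l k := by
    funext s; simp [Matrix.trace, Matrix.diag, Matrix.mul_apply]
  rw [h1]
  rw [pderiv_sum univ _ (fun k _ => by
    exact DifferentiableAt.fun_sum (fun l _ => (hM k l).fun_mul (hN l k)))]
  have h2 : ∀ k : Fin 2, pderiv n i (fun s => ∑ l : Fin 2, M s k l * N s l k) t
      = ∑ l : Fin 2, (M t k l * Q l k + N t l k * P k l) := by
    intro k
    rw [pderiv_sum univ _ (fun l _ => (hM k l).fun_mul (hN l k))]
    exact Finset.sum_congr rfl (fun l _ => by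
      rw [pderiv_mul (hM k l) (hN l k), hP, hQ])
  rw [Finset.sum_congr rfl (fun k _ => h2 k)]
  simp only [Matrix.trace, Matrix.diag, Matrix.mul_apply, Finset.sum_add_distrib]
  rw [add_comm]
  congr 1
  exact Finset.sum_congr rfl (fun k _ => Finset.sum_congr rfl (fun l _ => by ring))


lemma ext_lt (t : Fin n → ℂ) (j : Fin (n+2)) (h : (j:ℕ) < n) : ext n t j = t ⟨j, h⟩ :=
  dif_pos h
lemma ext_inc (t : Fin n → ℂ) (i : Fin n) : ext n t (inc n i) = t i := by
  rw [ext_lt t _ (by simp [inc])]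
  congr 1
lemma ext_n (t : Fin n → ℂ) : ext n t ⟨n, Nat.lt_add_of_pos_right two_pos⟩ = 0 := by
  simp [_root_.ext]
lemma ext_last (t : Fin n → ℂ) : ext n t ⟨n+1, Nat.lt_succ_self (n + 1)⟩ = 1 := by
  simp [_root_.ext]

-- trace identities
lemma tr1 (X Y Z : Matrix (Fin 2) (Fin 2) ℂ) :
    ((X * Y - Y * X) * Z).trace = (X * Y * Z).trace - (Y * X * Z).trace := by
  rw [Matrix.sub_mul, Matrix.trace_sub]

lemma tr2 (X Y Z : Matrix (Fin 2) (Fin 2) ℂ) :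
    (Y * (X * Z - Z * X)).trace = (Y * X * Z).trace - (X * Y * Z).trace := by
  rw [Matrix.mul_sub, Matrix.trace_sub, ← Matrix.mul_assoc, ← Matrix.mul_assoc,
    Matrix.trace_mul_cycle Y Z X]

end helpers

set_option maxHeartbeats 2000000 in
theorem aux (n : ℕ) (t : Fin n → ℂ)
    (A : Fin (n + 2) → (Fin n → ℂ) → Matrix (Fin 2) (Fin 2) ℂ)
    (hdist : ∀ j k : Fin (n + 2), j ≠ k → ext n t j ≠ ext n t k)
    (hder : ∀ (j : Fin (n + 2)) (k l : Fin 2), DifferentiableAt ℂ (fun s => A j s k l) t)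
    (hSch1 : ∀ (i : Fin n) (j : Fin (n + 2)), j ≠ inc n i → ∀ (k l : Fin 2),
        pderiv n i (fun s => A j s k l) t
          = ((t i - ext n t j)⁻¹ •
              (A (inc n i) t * A j t - A j t * A (inc n i) t)) k l)
    (hSch2 : ∀ (i : Fin n) (k l : Fin 2),
      pderiv n i (fun s => A (inc n i) s k l) t
        = ∑ j ∈ Finset.univ.filter (fun j => j ≠ inc n i),
            ((t i - ext n t j)⁻¹ •
              (A j t * A (inc n i) t - A (inc n i) t * A j t)) k l) :
    (∑ i, (t i - 1) *
          pderiv n i (fun s => ∑ j : Fin (n + 1),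
            (A (Fin.castLE (Nat.le_succ (n + 1)) j) s * A ⟨n + 1, Nat.lt_succ_self (n + 1)⟩ s).trace
              / (ext n s (Fin.castLE (Nat.le_succ (n + 1)) j) - 1)) t)
        + (∑ j : Fin (n + 1),
            (A (Fin.castLE (Nat.le_succ (n + 1)) j) t * A ⟨n + 1, Nat.lt_succ_self (n + 1)⟩ t).trace
              / (ext n t (Fin.castLE (Nat.le_succ (n + 1)) j) - 1))
        = -(A ⟨n, Nat.lt_add_of_pos_right two_pos⟩ t * A ⟨n + 1, Nat.lt_succ_self (n + 1)⟩ t).trace := by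
  set bb : Fin (n + 2) := ⟨n + 1, Nat.lt_succ_self (n + 1)⟩ with hbb
  set mm : Fin (n + 2) := ⟨n, Nat.lt_add_of_pos_right two_pos⟩ with hmm
  set cl : Fin (n + 1) → Fin (n + 2) := Fin.castLE (Nat.le_succ (n + 1)) with hcl
  -- basic values
  have hτb : ext n t bb = 1 := ext_last t
  have hτm : ext n t mm = 0 := ext_n t
  have hτinc : ∀ i : Fin n, ext n t (inc n i) = t i := ext_inc t
  have hb_ne_inc : ∀ i : Fin n, bb ≠ inc n i := by
    intro i
    apply Fin.ne_of_val_ne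
    simp [inc, hbb]
    omega
  have hne1 : ∀ i : Fin n, t i - 1 ≠ 0 := by
    intro i
    have := hdist (inc n i) bb (fun e => hb_ne_inc i e.symm)
    rw [hτinc, hτb] at this
    exact sub_ne_zero.mpr this
  have hneτ : ∀ (i : Fin n) (j : Fin (n + 2)), j ≠ inc n i → t i - ext n t j ≠ 0 := by
    intro i j hj
    have := hdist (inc n i) j (fun e => hj e.symm)
    rw [hτinc] at this
    exact sub_ne_zero.mpr this
  have hneτ1 : ∀ j : Fin (n + 2), j ≠ bb → ext n t j - 1 ≠ 0 := by
    intro j hj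
    have := hdist j bb hj
    rw [hτb] at this
    exact sub_ne_zero.mpr this
  have hclb : ∀ j : Fin (n + 1), cl j ≠ bb := by
    intro j
    apply Fin.ne_of_val_ne
    simp [hcl, hbb]
    omega
  -- scalar abbreviations
  set T : Fin (n + 2) → Fin (n + 2) → ℂ :=
    fun k j => ((A k t * A j t - A j t * A k t) * A bb t).trace with hT
  set S : Fin (n + 2) → ℂ := fun j => (A j t * A bb t).trace with hS
  have hTb : ∀ k : Fin (n + 2), T k bb = 0 := by
    intro k
    rw [hT]
    simp only
    rw [tr1, Matrix.trace_mul_cycle (A k t) (A bb t) (A bb t), sub_self]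
  have hTkk : ∀ k : Fin (n + 2), T k k = 0 := by
    intro k
    rw [hT]
    simp only [sub_self, Matrix.zero_mul, Matrix.trace_zero]
  -- differentiability of the numerators
  have htrace_eq : ∀ (j : Fin (n + 2)),
      (fun s => (A j s * A bb s).trace)
        = fun s => ∑ k : Fin 2, ∑ l : Fin 2, A j s k l * A bb s l k := by
    intro j
    funext s
    simp [Matrix.trace, Matrix.diag, Matrix.mul_apply]
  have hgdiff : ∀ j : Fin (n + 2),
      DifferentiableAt ℂ (fun s => (A j s * A bb s).trace) t := by
    intro j
    rw [htrace_eq j]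
    exact DifferentiableAt.fun_sum fun k _ =>
      DifferentiableAt.fun_sum fun l _ => (hder j k l).fun_mul (hder bb l k)
  -- pderiv of the numerators, off-diagonal case
  have hpg_off : ∀ (i : Fin n) (j : Fin (n + 2)), j ≠ inc n i →
      pderiv n i (fun s => (A j s * A bb s).trace) t
        = ((t i - ext n t j)⁻¹ - (t i - 1)⁻¹) * T (inc n i) j := by
    intro i j hj
    rw [pderiv_trace_mul (fun s => A j s) (fun s => A bb s)
        ((t i - ext n t j)⁻¹ • (A (inc n i) t * A j t - A j t * A (inc n i) t))
        ((t i - ext n t bb)⁻¹ • (A (inc n i) t * A bb t - A bb t * A (inc n i) t))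
        (hder j) (hder bb) (hSch1 i j hj) (hSch1 i bb (hb_ne_inc i))]
    rw [Matrix.smul_mul, Matrix.trace_smul, Matrix.mul_smul, Matrix.trace_smul]
    rw [tr1, tr2, hτb, hT]
    simp only [smul_eq_mul, tr1]
    ring
  -- pderiv of the numerator, diagonal case
  have hpg_diag : ∀ i : Fin n,
      pderiv n i (fun s => (A (inc n i) s * A bb s).trace) t
        = -(∑ k ∈ Finset.univ.filter (fun k => k ≠ inc n i),
            (t i - ext n t k)⁻¹ * T (inc n i) k) := by
    intro i
    rw [pderiv_trace_mul (fun s => A (inc n i) s) (fun s => A bb s)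
        (∑ k ∈ Finset.univ.filter (fun k => k ≠ inc n i),
          (t i - ext n t k)⁻¹ • (A k t * A (inc n i) t - A (inc n i) t * A k t))
        ((t i - ext n t bb)⁻¹ • (A (inc n i) t * A bb t - A bb t * A (inc n i) t))
        (hder (inc n i)) (hder bb)
        (fun k l => by rw [hSch2 i k l]; simp [Matrix.sum_apply, Matrix.sub_apply, Matrix.smul_apply, smul_eq_mul, mul_sub])
        (hSch1 i bb (hb_ne_inc i))]
    rw [Matrix.sum_mul, Matrix.trace_sum, Matrix.mul_smul, Matrix.trace_smul]
    rw [tr2, hτb]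
    have e0 : (A (inc n i) t * A (inc n i) t * A bb t).trace
        - (A (inc n i) t * A (inc n i) t * A bb t).trace = 0 := sub_self _
    rw [smul_eq_mul, e0, mul_zero, add_zero, ← Finset.sum_neg_distrib]
    apply Finset.sum_congr rfl
    intro k _
    rw [Matrix.smul_mul, Matrix.trace_smul, smul_eq_mul, hT]
    simp only [tr1]
    ring
  -- pderiv of the denominators
  have hpden : ∀ (i : Fin n) (j : Fin (n + 2)), (j : ℕ) ≤ n →
      pderiv n i (fun s => ext n s j - 1) t = if j = inc n i then 1 else 0 := by
    intro i j hj
    rw [pderiv_sub_const]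
    by_cases h : (j : ℕ) < n
    · have e : (fun s : Fin n → ℂ => ext n s j) = fun s => s ⟨j, h⟩ :=
        funext fun s => ext_lt s j h
      rw [e, pderiv_coord]
      by_cases hji : (j : ℕ) = (i : ℕ)
      · rw [if_pos (Fin.ext hji), if_pos (Fin.ext (by simpa [inc] using hji))]
      · rw [if_neg (fun e => hji (congrArg Fin.val e)),
          if_neg (fun e => hji (by simpa [inc] using congrArg Fin.val e))]
    · have hjn : (j : ℕ) = n := by omega
      have e : (fun s : Fin n → ℂ => ext n s j) = fun _ => 0 := by
        funext s
        simp [_root_.ext, h, hjn]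
      rw [e, pderiv_const]
      rw [if_neg]
      intro e
      have := congrArg Fin.val e
      simp [inc] at this
      omega
  have hddiff : ∀ j : Fin (n + 2), (j : ℕ) ≤ n →
      DifferentiableAt ℂ (fun s => ext n s j - 1) t := by
    intro j hj
    by_cases h : (j : ℕ) < n
    · have e : (fun s : Fin n → ℂ => ext n s j - 1) = fun s => s ⟨j, h⟩ - 1 := by
        funext s
        rw [ext_lt s j h]
      rw [e]
      exact ((ContinuousLinearMap.proj (⟨j, h⟩ : Fin n) :
        (Fin n → ℂ) →L[ℂ] ℂ).differentiableAt).sub_const 1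
    · have hjn : (j : ℕ) = n := by omega
      have e : (fun s : Fin n → ℂ => ext n s j - 1) = fun _ => (0 : ℂ) - 1 := by
        funext s
        simp [_root_.ext, h, hjn]
      rw [e]
      exact differentiableAt_const _
  have hcl_le : ∀ j : Fin (n + 1), ((cl j : Fin (n + 2)) : ℕ) ≤ n := by
    intro j
    simp [hcl]
    omega
  have hden0 : ∀ j : Fin (n + 1), ext n t (cl j) - 1 ≠ 0 := fun j => hneτ1 _ (hclb j)
  -- the summand functions
  set F : Fin (n + 1) → (Fin n → ℂ) → ℂ :=
    fun j s => (A (cl j) s * A bb s).trace / (ext n s (cl j) - 1) with hF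
  have hFdiff : ∀ j : Fin (n + 1), DifferentiableAt ℂ (F j) t := by
    intro j
    show DifferentiableAt ℂ
      (fun s => (A (cl j) s * A bb s).trace / (ext n s (cl j) - 1)) t
    have e : (fun s => (A (cl j) s * A bb s).trace / (ext n s (cl j) - 1))
        = fun s => (A (cl j) s * A bb s).trace * (ext n s (cl j) - 1)⁻¹ := by
      funext s
      rw [div_eq_mul_inv]
    rw [e]
    exact (hgdiff (cl j)).mul ((hddiff (cl j) (hcl_le j)).inv (hden0 j))
  have hpdF : ∀ (i : Fin n) (j : Fin (n + 1)),
      pderiv n i (F j) t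
        = (pderiv n i (fun s => (A (cl j) s * A bb s).trace) t * (ext n t (cl j) - 1)
            - S (cl j) * (if cl j = inc n i then 1 else 0)) / (ext n t (cl j) - 1) ^ 2 := by
    intro i j
    rw [hF]
    simp only
    rw [pderiv_div (hgdiff (cl j)) (hddiff _ (hcl_le j)) (hden0 j), hpden i _ (hcl_le j)]
  -- the auxiliary function ψ
  set ψ : Fin n → Fin (n + 2) → ℂ := fun i k =>
    if k = inc n i then
      -(∑ k' ∈ Finset.univ.filter (fun k' => k' ≠ inc n i),
        (t i - ext n t k')⁻¹ * T (inc n i) k')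
    else (t i - ext n t k)⁻¹ * T (inc n i) k with hψ
  have hfe : ∀ i : Fin n, Finset.univ.filter (fun k' : Fin (n + 2) => k' ≠ inc n i)
      = Finset.univ.erase (inc n i) := by
    intro i
    ext k
    simp [Finset.mem_erase, Finset.mem_filter, and_comm]
  have hψsum0 : ∀ i : Fin n, ∑ k : Fin (n + 2), ψ i k = 0 := by
    intro i
    rw [← Finset.add_sum_erase Finset.univ (ψ i) (Finset.mem_univ (inc n i))]
    have e1 : ψ i (inc n i)
        = -(∑ k' ∈ Finset.univ.filter (fun k' => k' ≠ inc n i),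
            (t i - ext n t k')⁻¹ * T (inc n i) k') := by
      simp [hψ]
    have e2 : ∑ k ∈ Finset.univ.erase (inc n i), ψ i k
        = ∑ k' ∈ Finset.univ.filter (fun k' => k' ≠ inc n i),
            (t i - ext n t k')⁻¹ * T (inc n i) k' := by
      rw [hfe i]
      apply Finset.sum_congr rfl
      intro k hk
      rw [hψ]
      simp only [if_neg (Finset.ne_of_mem_erase hk)]
    rw [e1, e2, neg_add_cancel]
  have hψb : ∀ i : Fin n, ψ i bb = 0 := by
    intro i
    rw [hψ]
    simp only [if_neg (hb_ne_inc i), hTb, mul_zero]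
  have hψcl0 : ∀ i : Fin n, ∑ j : Fin (n + 1), ψ i (cl j) = 0 := by
    intro i
    have h1 := Fin.sum_univ_castSucc (f := fun k : Fin (n + 2) => ψ i k)
    rw [hψsum0 i] at h1
    have h2 : (fun j : Fin (n + 1) => ψ i (Fin.castSucc j)) = fun j => ψ i (cl j) := rfl
    have h3 : (Fin.last (n + 1) : Fin (n + 2)) = bb := rfl
    rw [h2, h3, hψb i, add_zero] at h1
    exact h1.symm
  -- the key computation for a fixed i
  have key : ∀ i : Fin n,
      (t i - 1) * (∑ j : Fin (n + 1), pderiv n i (F j) t)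
        = -(S (inc n i) * (t i - 1)⁻¹) := by
    intro i
    rw [Finset.mul_sum]
    have hterm : ∀ j : Fin (n + 1),
        (t i - 1) * pderiv n i (F j) t
          = ψ i (cl j) + (if j = (⟨(i : ℕ), by omega⟩ : Fin (n + 1)) then
              -(S (inc n i) * (t i - 1)⁻¹) else 0) := by
      intro j
      rw [hpdF i j]
      by_cases hj : cl j = inc n i
      · have hji : j = (⟨(i : ℕ), by omega⟩ : Fin (n + 1)) := by
          apply Fin.ext
          simpa [hcl, inc] using congrArg Fin.val hj
        rw [hj, hpg_diag i, hτinc i, if_pos rfl, if_pos hji]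
        rw [hψ]
        simp only [if_pos rfl, ↓reduceIte]
        have hx := hne1 i
        set x : ℂ := t i - 1 with hxdef
        field_simp
        ring
      · have hji : j ≠ (⟨(i : ℕ), by omega⟩ : Fin (n + 1)) := by
          intro e
          apply hj
          rw [e]
          apply Fin.ext
          simp [hcl, inc]
        rw [if_neg hj, if_neg hji, add_zero, hpg_off i _ hj]
        rw [hψ]
        simp only [if_neg hj]
        have d1 := hden0 j
        have d2 := hneτ i (cl j) hj
        have d3 := hne1 i
        field_simp
        ring
    rw [Finset.sum_congr rfl (fun j _ => hterm j), Finset.sum_add_distrib, hψcl0 i, zero_add]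
    simp [Finset.sum_ite_eq']
  -- assemble everything
  have hfg : (fun s => ∑ j : Fin (n + 1),
      (A (cl j) s * A bb s).trace / (ext n s (cl j) - 1)) = fun s => ∑ j, F j s := rfl
  rw [hfg]
  have h4 : ∀ i : Fin n, pderiv n i (fun s => ∑ j, F j s) t = ∑ j, pderiv n i (F j) t :=
    fun i => pderiv_sum Finset.univ F (fun j _ => hFdiff j)
  have h5 : ∑ i : Fin n, (t i - 1) * pderiv n i (fun s => ∑ j, F j s) t
      = ∑ i : Fin n, -(S (inc n i) * (t i - 1)⁻¹) := by
    apply Finset.sum_congr rfl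
    intro i _
    rw [h4 i, key i]
  rw [h5]
  have h6 : ∑ j : Fin (n + 1), (A (cl j) t * A bb t).trace / (ext n t (cl j) - 1)
      = (∑ j : Fin n, S (inc n j) * (t j - 1)⁻¹) + -(S mm) := by
    rw [Fin.sum_univ_castSucc
      (f := fun j : Fin (n + 1) => (A (cl j) t * A bb t).trace / (ext n t (cl j) - 1))]
    congr 1
    · apply Finset.sum_congr rfl
      intro j _
      have e1 : cl (Fin.castSucc j) = inc n j := rfl
      rw [e1, hτinc j, div_eq_mul_inv]
    · have e2 : cl (Fin.last n) = mm := rfl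
      rw [e2, hτm]
      rw [hS]
      simp only
      ring
  rw [h6]
  have e3 : S mm = (A mm t * A bb t).trace := rfl
  rw [← e3]
  have hzero : (∑ x : Fin n, -(S (inc n x) * (t x - 1)⁻¹))
      = -∑ x : Fin n, S (inc n x) * (t x - 1)⁻¹ := by
    rw [Finset.sum_neg_distrib]
  rw [hzero]
  ring


/-- With `δ* = Σᵢ (tᵢ − 1) ∂/∂tᵢ`:
`(δ* + 1)(Σ_{j=1}^{n+1} tr(A_j A_{n+2})/(t_j − 1)) = −tr(A_{n+1} A_{n+2})`. -/
theorem deltaStar_trace_sum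
    (n : ℕ) (hn : 2 ≤ n) (θ : Fin (n + 3) → ℂ)
    (U : Set (Fin n → ℂ)) (hU : IsOpen U)
    (A : Fin (n + 2) → (Fin n → ℂ) → Matrix (Fin 2) (Fin 2) ℂ)
    (hdist : ∀ t ∈ U, ∀ j k : Fin (n + 2), j ≠ k → ext n t j ≠ ext n t k)
    (hHol : ∀ (j : Fin (n + 2)) (k l : Fin 2),
      DifferentiableOn ℂ (fun s => A j s k l) U)
    (hdet : ∀ t ∈ U, ∀ j, (A j t).det = 0)
    (htr : ∀ t ∈ U, ∀ j : Fin (n + 2), (A j t).trace = θ (Fin.castSucc j))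
    (hsum : ∀ t ∈ U, ∑ j, A j t =
      -Matrix.diagonal ![rho n θ, rho n θ + θ (Fin.last (n + 2))])
    (hSch1 : ∀ t ∈ U, ∀ (i : Fin n) (j : Fin (n + 2)), j ≠ inc n i →
      ∀ (k l : Fin 2),
        pderiv n i (fun s => A j s k l) t
          = ((t i - ext n t j)⁻¹ •
              (A (inc n i) t * A j t - A j t * A (inc n i) t)) k l)
    (hSch2 : ∀ t ∈ U, ∀ (i : Fin n) (k l : Fin 2),
      pderiv n i (fun s => A (inc n i) s k l) t
        = ∑ j ∈ Finset.univ.filter (fun j => j ≠ inc n i),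
            ((t i - ext n t j)⁻¹ •
              (A j t * A (inc n i) t - A (inc n i) t * A j t)) k l)
    :
    ∀ t ∈ U,
      (∑ i, (t i - 1) *
          pderiv n i (fun s => ∑ j : Fin (n + 1),
            (A (Fin.castLE (by omega) j) s * A ⟨n + 1, by omega⟩ s).trace
              / (ext n s (Fin.castLE (by omega) j) - 1)) t)
        + (∑ j : Fin (n + 1),
            (A (Fin.castLE (by omega) j) t * A ⟨n + 1, by omega⟩ t).trace
              / (ext n t (Fin.castLE (by omega) j) - 1))
        = -(A ⟨n, by omega⟩ t * A ⟨n + 1, by omega⟩ t).trace := by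
  intro t ht
  exact aux n t A (hdist t ht)
    (fun j k l => (hHol j k l).differentiableAt (hU.mem_nhds ht))
    (hSch1 t ht) (hSch2 t ht)
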